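/- arXiv:2110.09411 — 2 statements merged into one kernel-verified Lean document; each statement's English description precedes it below -/
import Mathlib

section
/- Assume additionally μ ≠ 0. Let v, δ ∈ ℕ₀ with δ ≤ v, let m, n ∈ ℕ with n ≥ m, and let x, z ∈ ℂ. Then the m-th partial derivative with respect to x of _Tℬ^{(s,v)}_{n,μ}(x,z;λ) equals m! · (−μ)^{−δ} · Σ_{r=0}^{n−m} binomial(n,r) · binomial(n−r,m) · ℬ^{(δ)}_{r}(−λ/μ) · _Tℬ^{(s,v−δ)}_{n−r−m,μ}(x,z;λ). (Note that λ + μ ≠ 0 guarantees −λ/μ ≠ 1.) -/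
/-!
Parametric kinds of generalized Apostol–Bernoulli polynomials (Özat–Çekim–Kızılateş–Qi).
All generating functions are formal power series in `t` over `ℂ`; each polynomial family is
`n!` times the `n`-th coefficient of its generating series.
-/

open PowerSeries

noncomputable section

/-- The formal power series `t / (λ eᵗ + μ)`. -/
def bker (lam mu : ℂ) : ℂ⟦X⟧ := X * (C lam * exp ℂ + C mu)⁻¹

/-- The formal power series `e^{x t}`. -/
def expS (x : ℂ) : ℂ⟦X⟧ := rescale x (exp ℂ)

/-- The formal power series `cos (z t)`. -/
def cosS (z : ℂ) : ℂ⟦X⟧ := rescale z (cos ℂ)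

/-- The formal power series `sin (z t)`. -/
def sinS (z : ℂ) : ℂ⟦X⟧ := rescale z (sin ℂ)

/-- Parametric (cosine) kind of generalized Apostol–Bernoulli polynomials
`_Tℬ^{(c,v)}_{n,μ}(x,z;λ)`, defined by
`(t/(λeᵗ+μ))^v e^{xt} U(t) cos(zt) = Σ_n _Tℬ^{(c,v)}_{n,μ}(x,z;λ) tⁿ/n!`. -/
def TBc (lam mu : ℂ) (U : ℂ⟦X⟧) (v n : ℕ) (x z : ℂ) : ℂ :=
  n.factorial * coeff n (bker lam mu ^ v * expS x * U * cosS z)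

/-- Parametric (sine) kind of generalized Apostol–Bernoulli polynomials
`_Tℬ^{(s,v)}_{n,μ}(x,z;λ)`, defined by
`(t/(λeᵗ+μ))^v e^{xt} U(t) sin(zt) = Σ_n _Tℬ^{(s,v)}_{n,μ}(x,z;λ) tⁿ/n!`. -/
def TBs (lam mu : ℂ) (U : ℂ⟦X⟧) (v n : ℕ) (x z : ℂ) : ℂ :=
  n.factorial * coeff n (bker lam mu ^ v * expS x * U * sinS z)

/-- `_Tℬ^{(v)}_{n,μ}(x;λ)`, defined by
`(t/(λeᵗ+μ))^v e^{xt} U(t) = Σ_n _Tℬ^{(v)}_{n,μ}(x;λ) tⁿ/n!`. -/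
def TB (lam mu : ℂ) (U : ℂ⟦X⟧) (v n : ℕ) (x : ℂ) : ℂ :=
  n.factorial * coeff n (bker lam mu ^ v * expS x * U)

/-- Cosine generalized Apostol–Bernoulli polynomials `ℬ^{(c,v)}_{n,μ}(x,z;λ)`, defined by
`(t/(λeᵗ+μ))^v e^{xt} cos(zt) = Σ_n ℬ^{(c,v)}_{n,μ}(x,z;λ) tⁿ/n!`. -/
def Bc (lam mu : ℂ) (v n : ℕ) (x z : ℂ) : ℂ :=
  n.factorial * coeff n (bker lam mu ^ v * expS x * cosS z)

/-- Sine generalized Apostol–Bernoulli polynomials `ℬ^{(s,v)}_{n,μ}(x,z;λ)`. -/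
def Bs (lam mu : ℂ) (v n : ℕ) (x z : ℂ) : ℂ :=
  n.factorial * coeff n (bker lam mu ^ v * expS x * sinS z)

/-- Generalized Apostol–Bernoulli polynomials of order `v`: `ℬ^{(v)}_{n,μ}(x;λ)`, defined by
`(t/(λeᵗ+μ))^v e^{xt} = Σ_n ℬ^{(v)}_{n,μ}(x;λ) tⁿ/n!`. -/
def Bpoly (lam mu : ℂ) (v n : ℕ) (x : ℂ) : ℂ :=
  n.factorial * coeff n (bker lam mu ^ v * expS x)

/-- Generalized Apostol–Bernoulli numbers `ℬ^{(v)}_{n,μ}(λ) := ℬ^{(v)}_{n,μ}(0;λ)`. -/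
def Bnum (lam mu : ℂ) (v n : ℕ) : ℂ := Bpoly lam mu v n 0

/-- The 2-variable general polynomials `T_n(x)`, defined by `e^{xt} U(t) = Σ_n T_n(x) tⁿ/n!`. -/
def Tpoly (U : ℂ⟦X⟧) (n : ℕ) (x : ℂ) : ℂ := n.factorial * coeff n (expS x * U)

/-- `U_n := n!` times the `n`-th coefficient of `U`. -/
def Unum (U : ℂ⟦X⟧) (n : ℕ) : ℂ := n.factorial * coeff n U

/-- `C_n(x,y)`, defined by `e^{xt} cos(yt) = Σ_n C_n(x,y) tⁿ/n!`. -/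
def Cpoly (n : ℕ) (x y : ℂ) : ℂ := n.factorial * coeff n (expS x * cosS y)

/-- `S_n(x,y)`, defined by `e^{xt} sin(yt) = Σ_n S_n(x,y) tⁿ/n!`. -/
def Spoly (n : ℕ) (x y : ℂ) : ℂ := n.factorial * coeff n (expS x * sinS y)

/-- Apostol–Bernoulli numbers of order `δ`: `ℬ^{(δ)}_n(Λ)`, defined by
`(t/(Λeᵗ−1))^δ = Σ_n ℬ^{(δ)}_n(Λ) tⁿ/n!`. -/
def ABnum (L : ℂ) (d n : ℕ) : ℂ :=
  n.factorial * coeff n ((X * (C L * exp ℂ - 1)⁻¹) ^ d)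

/-- Generalized Apostol–Genocchi polynomials `𝒢^{(v)}_{n,μ}(x;λ)`, defined by
`(2t/(λeᵗ+μ))^v e^{xt} = Σ_n 𝒢^{(v)}_{n,μ}(x;λ) tⁿ/n!`. -/
def Gpoly (lam mu : ℂ) (v n : ℕ) (x : ℂ) : ℂ :=
  n.factorial * coeff n ((C 2 * X * (C lam * exp ℂ + C mu)⁻¹) ^ v * expS x)

end

section Aux
open PowerSeries

lemma coeff_expS_mul (F : ℂ⟦X⟧) (k : ℕ) (x : ℂ) :
    coeff k (expS x * F) =
      ∑ i ∈ Finset.range (k + 1), x ^ i * (((i.factorial : ℂ))⁻¹ * coeff (k - i) F) := by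
  rw [coeff_mul, Finset.Nat.sum_antidiagonal_eq_sum_range_succ_mk]
  refine Finset.sum_congr rfl fun i _ => ?_
  have : coeff i (expS x) = x ^ i * ((i.factorial : ℂ))⁻¹ := by
    simp [expS, coeff_rescale, coeff_exp, one_div]
  rw [this, mul_assoc]

lemma hasDerivAt_coeff (F : ℂ⟦X⟧) (k : ℕ) (hk : 1 ≤ k) (x : ℂ) :
    HasDerivAt (fun x : ℂ => coeff k (expS x * F)) (coeff (k - 1) (expS x * F)) x := by
  have hfun : (fun x : ℂ => coeff k (expS x * F)) =
      fun x : ℂ => ∑ i ∈ Finset.range (k + 1),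
        x ^ i * (((i.factorial : ℂ))⁻¹ * coeff (k - i) F) := by
    funext y; exact coeff_expS_mul F k y
  rw [hfun]
  have h : HasDerivAt (fun x : ℂ => ∑ i ∈ Finset.range (k + 1),
        x ^ i * (((i.factorial : ℂ))⁻¹ * coeff (k - i) F))
      (∑ i ∈ Finset.range (k + 1),
        ((i : ℂ) * x ^ (i - 1)) * (((i.factorial : ℂ))⁻¹ * coeff (k - i) F)) x := by
    apply HasDerivAt.fun_sum
    intro i _
    exact (hasDerivAt_pow i x).mul_const _
  convert h using 1
  rw [coeff_expS_mul]
  rw [Finset.sum_range_succ' (fun i => ((i : ℂ) * x ^ (i - 1)) *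
        (((i.factorial : ℂ))⁻¹ * coeff (k - i) F))]
  have hk1 : k - 1 + 1 = k := Nat.succ_pred_eq_of_pos hk
  simp only [Nat.cast_zero, zero_mul, add_zero, Nat.cast_succ]
  rw [← hk1]
  refine Finset.sum_congr rfl fun j _ => ?_
  have hfac : ((j : ℂ) + 1) * (((j + 1).factorial : ℂ))⁻¹ = ((j.factorial : ℂ))⁻¹ := by
    rw [Nat.factorial_succ]
    push_cast
    rw [mul_inv, ← mul_assoc, mul_inv_cancel₀ (Nat.cast_add_one_ne_zero j), one_mul]
  have harg : k - 1 + 1 - (j + 1) = k - 1 - j := by omega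
  rw [harg, Nat.add_sub_cancel]
  push_cast
  rw [← hfac]
  ring

lemma iter_deriv (F : ℂ⟦X⟧) (c : ℂ) (n : ℕ) : ∀ m ≤ n,
    iteratedDeriv m (fun x : ℂ => c * coeff n (expS x * F)) =
      fun x : ℂ => c * coeff (n - m) (expS x * F) := by
  intro m
  induction m with
  | zero => intro _; simp
  | succ m ih =>
    intro hmn
    have hm : m ≤ n := by omega
    rw [iteratedDeriv_succ, ih hm]
    funext y
    have h := (hasDerivAt_coeff F (n - m) (by omega) y).const_mul c
    rw [show n - m - 1 = n - (m + 1) from by omega] at h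
    exact h.deriv

lemma bker_eq (lam mu : ℂ) (hlm : lam + mu ≠ 0) (hmu : mu ≠ 0) :
    bker lam mu = C (-mu)⁻¹ * (X * (C (-lam / mu) * exp ℂ - 1)⁻¹) := by
  set A : ℂ⟦X⟧ := C lam * exp ℂ + C mu with hA
  set B : ℂ⟦X⟧ := C (-lam / mu) * exp ℂ - 1 with hB
  have hmu' : (-mu) ≠ 0 := neg_ne_zero.mpr hmu
  have hBA : B = C (-mu)⁻¹ * A := by
    rw [hA, hB, mul_add, ← mul_assoc, ← map_mul, ← map_mul]
    have h1 : (-mu)⁻¹ * lam = -lam / mu := by field_simp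
    have h2 : (-mu)⁻¹ * mu = -1 := by field_simp
    rw [h1, h2, map_neg, map_one]
    ring
  have : B⁻¹ = C (-mu) * A⁻¹ := by
    rw [hBA, PowerSeries.mul_inv_rev, PowerSeries.C_inv, inv_inv, mul_comm]
  rw [bker, this]
  have hc : (C (-mu)⁻¹) * C (-mu) = 1 := by rw [← map_mul, inv_mul_cancel₀ hmu', map_one]
  calc X * A⁻¹ = ((C (-mu)⁻¹) * C (-mu)) * (X * A⁻¹) := by rw [hc, one_mul]
    _ = C (-mu)⁻¹ * (X * (C (-mu) * A⁻¹)) := by ring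

lemma nat_fac_id (n m r : ℕ) (hmn : m ≤ n) (hr : r ≤ n - m) :
    n.factorial = m.factorial * n.choose r * (n - r).choose m * r.factorial *
      (n - r - m).factorial := by
  have h1 : r ≤ n := by omega
  have h2 : m ≤ n - r := by omega
  have e1 := Nat.choose_mul_factorial_mul_factorial h1
  have e2 := Nat.choose_mul_factorial_mul_factorial h2
  calc n.factorial = n.choose r * r.factorial * (n - r).factorial := e1.symm
    _ = n.choose r * r.factorial * ((n - r).choose m * m.factorial * (n - r - m).factorial) := by
        rw [e2]
    _ = _ := by ring

end Aux

theorem stmt17 (lam mu : ℂ) (hlm : lam + mu ≠ 0) (U : ℂ⟦X⟧) (hU : PowerSeries.coeff 0 U ≠ 0)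
    (hmu : mu ≠ 0) (v δ : ℕ) (hδ : δ ≤ v) (m n : ℕ) (hm : 1 ≤ m) (hmn : m ≤ n) (x z : ℂ) :
    iteratedDeriv m (fun x : ℂ => TBs lam mu U v n x z) x
      = (m.factorial : ℂ) * (-mu) ^ (-(δ : ℤ)) *
          ∑ r ∈ Finset.range (n - m + 1),
            (n.choose r : ℂ) * ((n - r).choose m : ℂ) * ABnum (-lam / mu) δ r *
              TBs lam mu U (v - δ) (n - r - m) x z := by
  set Bser : ℂ⟦X⟧ := X * (C (-lam / mu) * exp ℂ - 1)⁻¹ with hBser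
  have hTB : ∀ (w k : ℕ) (y : ℂ), TBs lam mu U w k y z =
      (k.factorial : ℂ) * coeff k (expS y * (bker lam mu ^ w * U * sinS z)) := by
    intro w k y
    rw [TBs]
    congr 2
    ring
  set F : ℂ⟦X⟧ := bker lam mu ^ v * U * sinS z with hF
  have hfun : (fun x : ℂ => TBs lam mu U v n x z) =
      fun x : ℂ => (n.factorial : ℂ) * coeff n (expS x * F) := funext fun y => hTB v n y
  rw [hfun, iter_deriv F _ n m hmn]
  have hpow : bker lam mu ^ v = C (((-mu)⁻¹) ^ δ) * (Bser ^ δ * bker lam mu ^ (v - δ)) := by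
    have hd : bker lam mu ^ δ = C (((-mu)⁻¹) ^ δ) * Bser ^ δ := by
      rw [bker_eq lam mu hlm hmu, mul_pow, ← map_pow]
    calc bker lam mu ^ v = bker lam mu ^ δ * bker lam mu ^ (v - δ) := by
          rw [← pow_add]; congr 1; omega
      _ = _ := by rw [hd, mul_assoc]
  have key : coeff (n - m) (expS x * F) =
      ((-mu)⁻¹) ^ δ * ∑ r ∈ Finset.range (n - m + 1),
        coeff r (Bser ^ δ) *
          coeff (n - m - r) (expS x * (bker lam mu ^ (v - δ) * U * sinS z)) := by
    have hre : expS x * F =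
        C (((-mu)⁻¹) ^ δ) *
          (Bser ^ δ * (expS x * (bker lam mu ^ (v - δ) * U * sinS z))) := by
      rw [hF, hpow]; ring
    rw [hre, coeff_C_mul, coeff_mul, Finset.Nat.sum_antidiagonal_eq_sum_range_succ_mk]
  beta_reduce
  rw [key]
  have hzpow : (-mu : ℂ) ^ (-(δ : ℤ)) = ((-mu)⁻¹) ^ δ := by
    rw [zpow_neg, zpow_natCast, inv_pow]
  rw [hzpow, ← mul_assoc, Finset.mul_sum, Finset.mul_sum]
  refine Finset.sum_congr rfl fun r hr => ?_
  have hr' : r ≤ n - m := Finset.mem_range_succ_iff.mp hr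
  have idx : n - m - r = n - r - m := by omega
  rw [idx, hTB (v - δ) (n - r - m) x]
  have hfacC : (n.factorial : ℂ) = (m.factorial : ℂ) * (n.choose r : ℂ) *
      ((n - r).choose m : ℂ) * (r.factorial : ℂ) * ((n - r - m).factorial : ℂ) := by
    exact_mod_cast nat_fac_id n m r hmn hr'
  rw [ABnum, hfacC]
  ring
end

section
/- Let v, α ∈ ℕ₀, let m, n ∈ ℕ with n ≥ m, and let x, k, z ∈ ℂ. Then the m-th partial derivative with respect to k of the function k ↦ _Tℬ^{(c,v+α)}_{n,μ}(x+k,z;λ) equals (m!/2^v) · Σ_{r=m}^{n} binomial(n,r) · binomial(r,m) · 𝒢^{(v)}_{r−m,μ}(x;λ) · _Tℬ^{(c,α)}_{n−r,μ}(k,z;λ). -/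
/-!
Parametric kinds of generalized Apostol–Bernoulli polynomials (Özat–Çekim–Kızılateş–Qi).
All generating functions are formal power series in `t` over `ℂ`; each polynomial family is
`n!` times the `n`-th coefficient of its generating series.
-/

open PowerSeries

noncomputable section AuxStmt18

open Finset

/-- Auxiliary series coefficient extractor. -/
def Fser (P : ℂ⟦X⟧) (j : ℕ) (k : ℂ) : ℂ := j.factorial * coeff j (expS k * P)

lemma coeff_expS' (x : ℂ) (n : ℕ) : coeff n (expS x) = x ^ n / n.factorial := by
  simp [expS, coeff_rescale, coeff_exp, algebraMap]; ring

lemma coeff_mul_expand (A B : ℂ⟦X⟧) (j : ℕ) :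
    (j.factorial : ℂ) * coeff j (A * B)
      = ∑ s ∈ range (j + 1), (j.choose s : ℂ) *
          ((s.factorial : ℂ) * coeff s A) *
          (((j - s).factorial : ℂ) * coeff (j - s) B) := by
  rw [PowerSeries.coeff_mul, Finset.Nat.sum_antidiagonal_eq_sum_range_succ_mk, Finset.mul_sum]
  refine Finset.sum_congr rfl fun s hs => ?_
  have hsj : s ≤ j := by simpa using Nat.lt_succ_iff.mp (Finset.mem_range.mp hs)
  have hfac : (j.factorial : ℂ) = (j.choose s : ℂ) * s.factorial * (j - s).factorial := by
    exact_mod_cast (Nat.choose_mul_factorial_mul_factorial hsj).symm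
  rw [hfac]; ring

lemma Fser_eq (P : ℂ⟦X⟧) (j : ℕ) (k : ℂ) :
    Fser P j k = ∑ i ∈ range (j + 1),
      (j.choose i : ℂ) * k ^ i * (((j - i).factorial : ℂ) * coeff (j - i) P) := by
  rw [Fser, coeff_mul_expand]
  refine Finset.sum_congr rfl fun i hi => ?_
  rw [coeff_expS']
  have : (i.factorial : ℂ) ≠ 0 := Nat.cast_ne_zero.mpr i.factorial_ne_zero
  field_simp

lemma hasDerivAt_Fser (P : ℂ⟦X⟧) (j : ℕ) (hj : 1 ≤ j) (k : ℂ) :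
    HasDerivAt (fun k => Fser P j k) ((j : ℂ) * Fser P (j - 1) k) k := by
  obtain ⟨j, rfl⟩ : ∃ j', j = j' + 1 := ⟨j - 1, by omega⟩
  have hfun : (fun k : ℂ => Fser P (j + 1) k)
      = fun k : ℂ => ∑ i ∈ range (j + 2),
          ((j + 1).choose i : ℂ) * k ^ i *
            (((j + 1 - i).factorial : ℂ) * coeff (j + 1 - i) P) :=
    funext fun k => Fser_eq P (j + 1) k
  rw [hfun]
  have hD : HasDerivAt
      (fun k : ℂ => ∑ i ∈ range (j + 2),
        ((j + 1).choose i : ℂ) * k ^ i *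
          (((j + 1 - i).factorial : ℂ) * coeff (j + 1 - i) P))
      (∑ i ∈ range (j + 2),
        ((j + 1).choose i : ℂ) * ((i : ℂ) * k ^ (i - 1)) *
          (((j + 1 - i).factorial : ℂ) * coeff (j + 1 - i) P)) k := by
    refine HasDerivAt.fun_sum fun i _ => ?_
    simpa [mul_assoc, mul_comm, mul_left_comm] using
      (((hasDerivAt_pow i k).const_mul (((j + 1).choose i : ℂ))).mul_const
        (((j + 1 - i).factorial : ℂ) * coeff (j + 1 - i) P))
  convert hD using 1
  rw [Finset.sum_range_succ']
  simp only [Nat.cast_zero, zero_mul, mul_zero, zero_add, pow_zero, add_zero]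
  rw [Fser_eq, Finset.mul_sum]
  refine Finset.sum_congr rfl fun i hi => ?_
  have hch : ((j + 1).choose (i + 1) : ℂ) * ((i : ℂ) + 1) = ((j : ℂ) + 1) * (j.choose i : ℂ) := by
    have h := congrArg (Nat.cast : ℕ → ℂ) (Nat.add_one_mul_choose_eq j i)
    push_cast at h
    linear_combination -h
  have hsub : j + 1 - (i + 1) = j - i := by omega
  rw [hsub]
  have hpow : i + 1 - 1 = i := by omega
  rw [hpow]
  push_cast
  linear_combination -(k ^ i * (((j - i).factorial : ℂ) * coeff (j - i) P)) * hch

lemma iteratedDeriv_Fser (P : ℂ⟦X⟧) (m : ℕ) :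
    ∀ (c : ℂ) (j : ℕ), m ≤ j → ∀ k : ℂ,
      iteratedDeriv m (fun k => c * Fser P j k) k
        = c * (j.descFactorial m : ℂ) * Fser P (j - m) k := by
  induction m with
  | zero => intro c j _ k; simp
  | succ m ih =>
    intro c j hj k
    rw [iteratedDeriv_succ']
    have hd : deriv (fun k => c * Fser P j k) = fun k => (c * (j : ℂ)) * Fser P (j - 1) k := by
      funext k
      have h := ((hasDerivAt_Fser P j (by omega) k).const_mul c)
      simpa [mul_assoc] using h.deriv
    rw [hd, ih (c * (j : ℂ)) (j - 1) (by omega) k]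
    have h1 : j - 1 - m = j - (m + 1) := by omega
    have h2 : ((j : ℂ)) * ((j - 1).descFactorial m : ℂ) = (j.descFactorial (m + 1) : ℂ) := by
      obtain ⟨j', rfl⟩ : ∃ j', j = j' + 1 := ⟨j - 1, by omega⟩
      rw [Nat.succ_descFactorial_succ]
      push_cast
      simp
    rw [h1]
    linear_combination (c * Fser P (j - (m + 1)) k) * h2

lemma Gpoly_eq_two_pow_mul (lam mu : ℂ) (v r : ℕ) (x : ℂ) :
    Gpoly lam mu v r x = 2 ^ v * Bpoly lam mu v r x := by
  simp only [Gpoly, Bpoly, bker]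
  have h : (C 2 * X * (C lam * exp ℂ + C mu)⁻¹) ^ v * expS x
      = C (2 ^ v) * ((X * (C lam * exp ℂ + C mu)⁻¹) ^ v * expS x) := by
    rw [map_pow]; ring
  rw [h, coeff_C_mul]
  ring

end AuxStmt18

theorem stmt18 (lam mu : ℂ) (hlm : lam + mu ≠ 0) (U : ℂ⟦X⟧) (hU : PowerSeries.coeff 0 U ≠ 0)
    (v α : ℕ) (m n : ℕ) (hm : 1 ≤ m) (hmn : m ≤ n) (x k z : ℂ) :
    iteratedDeriv m (fun k : ℂ => TBc lam mu U (v + α) n (x + k) z) k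
      = (m.factorial : ℂ) / 2 ^ v *
          ∑ r ∈ Finset.Icc m n,
            (n.choose r : ℂ) * (r.choose m : ℂ) * Gpoly lam mu v (r - m) x *
              TBc lam mu U α (n - r) k z := by
  classical
  set P : ℂ⟦X⟧ := bker lam mu ^ (v + α) * expS x * U * cosS z with hP
  have hfun : (fun k : ℂ => TBc lam mu U (v + α) n (x + k) z) = fun k : ℂ => Fser P n k := by
    funext k
    simp only [TBc, Fser, hP]
    congr 1
    rw [show expS (x + k) = expS x * expS k by
      simp only [expS]; rw [exp_mul_exp_eq_exp_add]]
    ring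
  have hID : iteratedDeriv m (fun k : ℂ => Fser P n k) k
      = (n.descFactorial m : ℂ) * Fser P (n - m) k := by
    have h := iteratedDeriv_Fser P m 1 n hmn k
    simpa using h
  have hsplit : Fser P (n - m) k = ∑ s ∈ Finset.range (n - m + 1),
      ((n - m).choose s : ℂ) * Bpoly lam mu v s x * TBc lam mu U α (n - m - s) k z := by
    have h1 : expS k * P
        = (bker lam mu ^ v * expS x) * (bker lam mu ^ α * expS k * U * cosS z) := by
      simp only [hP, pow_add]; ring
    rw [Fser, h1, coeff_mul_expand]
    refine Finset.sum_congr rfl fun s hs => ?_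
    simp only [Bpoly, TBc]
  rw [hfun, hID, hsplit]
  rw [show Finset.Icc m n = Finset.Ico m (n + 1) from (Finset.Ico_add_one_right_eq_Icc m n).symm,
    Finset.sum_Ico_eq_sum_range, show n + 1 - m = n - m + 1 by omega,
    Finset.mul_sum, Finset.mul_sum]
  refine Finset.sum_congr rfl fun s hs => ?_
  have hsnm : s ≤ n - m := by
    have := Finset.mem_range.mp hs; omega
  rw [show m + s - m = s by omega, show n - (m + s) = n - m - s by omega,
    Gpoly_eq_two_pow_mul]
  have hnat : n.descFactorial m * ((n - m).choose s)
      = m.factorial * (n.choose (m + s) * ((m + s).choose m)) := by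
    have h := Nat.choose_mul (n := n) (Nat.le_add_right m s)
    rw [Nat.add_sub_cancel_left] at h
    rw [Nat.descFactorial_eq_factorial_mul_choose, h]
    ring
  have hkey : (n.descFactorial m : ℂ) * ((n - m).choose s : ℂ)
      = (m.factorial : ℂ) * ((n.choose (m + s) : ℂ) * ((m + s).choose m : ℂ)) := by
    exact_mod_cast hnat
  have h2v : (2 : ℂ) ^ v ≠ 0 := pow_ne_zero _ two_ne_zero
  field_simp
  linear_combination (Bpoly lam mu v s x * TBc lam mu U α (n - m - s) k z) * hkey
end
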